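/- Let l be an odd prime and let G be a finite non-abelian l-group possessing an abelian subgroup G' of index l. Then l·|[G,G]| divides [G : Z(G)], i.e. the rational number [G : Z(G)]/(l·|[G,G]|) is an integer. (Lemma 4.1(2).) -/

import Mathlib

/-- **Lemma 4.1(2)**: If `l` is an odd prime and `G` is a finite non-abelian `l`-group
possessing an abelian subgroup `G'` of index `l`, then `l * |[G,G]|` divides `[G : Z(G)]`. -/
theorem stmt0 (l : ℕ) (hl : l.Prime) (hodd : Odd l)
    (G : Type*) [Group G] [Fintype G] (hpG : IsPGroup l G)
    (hnab : ¬ ∀ a b : G, a * b = b * a)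
    (G' : Subgroup G) (hab : ∀ x y : G', x * y = y * x) (hidx : G'.index = l) :
    l * Nat.card (commutator G) ∣ (Subgroup.center G).index := by
  classical
  haveI : Fact l.Prime := ⟨hl⟩
  set Z := Subgroup.center G with hZdef
  -- G' is a proper subgroup
  have hG'ne : G' ≠ ⊤ := by
    intro h
    rw [h, Subgroup.index_top] at hidx
    exact hl.one_lt.ne' hidx.symm
  -- G' is a coatom (maximal proper subgroup)
  have hcoatom : IsCoatom G' := by
    constructor
    · exact hG'ne
    · intro M hM
      have hdvd : M.index ∣ l := hidx ▸ Subgroup.index_dvd_of_le hM.le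
      rcases hl.eq_one_or_self_of_dvd _ hdvd with h1 | h1
      · exact Subgroup.index_eq_one.mp h1
      · exfalso
        have hmul := Subgroup.relIndex_mul_index hM.le
        rw [h1, hidx] at hmul
        have hrel : G'.relIndex M = 1 := by
          have : G'.relIndex M * l = 1 * l := by simpa using hmul
          exact Nat.eq_of_mul_eq_mul_right hl.pos this
        exact (lt_iff_le_not_ge.mp hM).2 (Subgroup.relIndex_eq_one.mp hrel)
  -- G' is normal
  haveI hG'n : G'.Normal := by
    haveI : Group.IsNilpotent G := hpG.isNilpotent
    exact Subgroup.NormalizerCondition.normal_of_coatom G' normalizerCondition_of_isNilpotent hcoatom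
  -- commutativity in G'
  have hcomm : ∀ a b : G, a ∈ G' → b ∈ G' → a * b = b * a := by
    intro a b ha hb
    simpa using Subtype.ext_iff.mp (hab ⟨a, ha⟩ ⟨b, hb⟩)
  -- an element outside G'
  obtain ⟨x, hx⟩ : ∃ x : G, x ∉ G' := by
    by_contra h
    push_neg at h
    exact hG'ne ((Subgroup.eq_top_iff' G').mpr h)
  -- generation: if y ∉ G', every element of G is y^i * a with a ∈ G'
  have gen : ∀ y : G, y ∉ G' → ∀ g : G, ∃ (i : ℤ) (a : G), a ∈ G' ∧ g = y ^ i * a := by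
    intro y hy g
    have hQcard : Nat.card (G ⧸ G') = l := by
      rw [← Subgroup.index_eq_card]; exact hidx
    have hy1 : (QuotientGroup.mk y : G ⧸ G') ≠ 1 := by
      simpa [QuotientGroup.eq_one_iff] using hy
    have hord : orderOf (QuotientGroup.mk y : G ⧸ G') = l :=
      orderOf_eq_prime (by rw [← hQcard]; exact pow_card_eq_one') hy1
    have htop : Subgroup.zpowers (QuotientGroup.mk y : G ⧸ G') = ⊤ := by
      apply Subgroup.eq_top_of_card_eq
      rw [Nat.card_zpowers, hord, hQcard]
    have hmem : (QuotientGroup.mk g : G ⧸ G') ∈ Subgroup.zpowers (QuotientGroup.mk y) := by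
      rw [htop]; exact Subgroup.mem_top _
    obtain ⟨i, hi⟩ := hmem
    refine ⟨i, (y ^ i)⁻¹ * g, ?_, by group⟩
    have : (QuotientGroup.mk (y ^ i) : G ⧸ G') = QuotientGroup.mk g := by
      rw [QuotientGroup.mk_zpow]; exact hi
    exact (QuotientGroup.eq).mp this
  -- conjugation stays in G'
  have hconj : ∀ a ∈ G', x⁻¹ * a * x ∈ G' := by
    intro a ha
    simpa using hG'n.conj_mem a ha x⁻¹
  -- the commutator homomorphism f : G' → G', a ↦ x⁻¹ a x a⁻¹
  let f : G' →* G' :=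
    { toFun := fun a => ⟨x⁻¹ * a * x * (a : G)⁻¹,
        G'.mul_mem (hconj a a.2) (G'.inv_mem a.2)⟩
      map_one' := by ext; simp
      map_mul' := by
        intro a b
        ext
        push_cast
        have hc : ((a : G))⁻¹ * (x⁻¹ * b * x * (b : G)⁻¹)
            = (x⁻¹ * b * x * (b : G)⁻¹) * (a : G)⁻¹ :=
          hcomm _ _ (G'.inv_mem a.2) (G'.mul_mem (hconj b b.2) (G'.inv_mem b.2))
        have h1 : (x⁻¹ * (a : G) * x * (a : G)⁻¹) * (x⁻¹ * (b : G) * x * (b : G)⁻¹)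
            = x⁻¹ * (a : G) * x * (((a : G))⁻¹ * (x⁻¹ * (b : G) * x * (b : G)⁻¹)) := by
          group
        rw [h1, hc]
        group }
  -- K is the image of f inside G
  set K : Subgroup G := f.range.map G'.subtype with hKdef
  have hKmem : ∀ z : G, z ∈ K ↔ ∃ a, ∃ _ : a ∈ G', z = x⁻¹ * a * x * a⁻¹ := by
    intro z
    constructor
    · rintro ⟨y, ⟨a, rfl⟩, rfl⟩
      exact ⟨a, a.2, rfl⟩
    · rintro ⟨a, ha, rfl⟩
      exact ⟨f ⟨a, ha⟩, ⟨⟨a, ha⟩, rfl⟩, rfl⟩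
  have hKG' : K ≤ G' := Subgroup.map_subtype_le _
  -- conjugation by x and x⁻¹ preserves K
  have hxK : ∀ z ∈ K, x * z * x⁻¹ ∈ K := by
    intro z hz
    rw [hKmem] at hz ⊢
    obtain ⟨a, ha, rfl⟩ := hz
    exact ⟨x * a * x⁻¹, hG'n.conj_mem a ha x, by group⟩
  have hxK' : ∀ z ∈ K, x⁻¹ * z * x ∈ K := by
    intro z hz
    rw [hKmem] at hz ⊢
    obtain ⟨a, ha, rfl⟩ := hz
    exact ⟨x⁻¹ * a * x, hconj a ha, by group⟩
  -- elements of G' centralize K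
  have hconjmem : ∀ g ∈ G', ∀ u ∈ K, g * u * g⁻¹ = u := by
    intro g hg u hu
    have h := hcomm g u hg (hKG' hu)
    rw [h]; group
  -- K is normal
  have hnormalizer : Subgroup.normalizer (K : Set G) = ⊤ := by
    have hle : G' ≤ Subgroup.closure (insert x (G' : Set G)) := fun g hg =>
      Subgroup.subset_closure (Set.mem_insert_of_mem _ hg)
    have hxin : x ∈ Subgroup.closure (insert x (G' : Set G)) :=
      Subgroup.subset_closure (Set.mem_insert _ _)
    have hcl : Subgroup.closure (insert x (G' : Set G)) = ⊤ :=
      hcoatom.2 _ (lt_of_le_of_ne hle (fun h => hx (by rw [h]; exact hxin)))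
    rw [eq_top_iff, ← hcl]
    rw [Subgroup.closure_le]
    rintro g (rfl | hg)
    · rw [SetLike.mem_coe, Subgroup.mem_normalizer_iff]
      intro h
      constructor
      · exact hxK h
      · intro hh
        have h2 := hxK' _ hh
        rwa [show g⁻¹ * (g * h * g⁻¹) * g = h from by group] at h2
    · rw [SetLike.mem_coe, Subgroup.mem_normalizer_iff]
      intro h
      constructor
      · intro hh
        rw [hconjmem g hg h hh]; exact hh
      · intro hh
        have h2 := hconjmem g⁻¹ (G'.inv_mem hg) _ hh
        rw [show g⁻¹ * (g * h * g⁻¹) * g⁻¹⁻¹ = h from by group] at h2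
        rw [h2]; exact hh
  haveI hKn : K.Normal := Subgroup.normalizer_eq_top_iff.mp hnormalizer
  -- the quotient G ⧸ K is commutative
  have hxa : ∀ a ∈ G', Commute (QuotientGroup.mk x : G ⧸ K) (QuotientGroup.mk a) := by
    intro a ha
    have hmem2 : (a * x)⁻¹ * (x * a) ∈ K := by
      rw [hKmem]
      exact ⟨a⁻¹, G'.inv_mem ha, by group⟩
    have h2 : (QuotientGroup.mk (a * x) : G ⧸ K) = QuotientGroup.mk (x * a) :=
      (QuotientGroup.eq).mpr hmem2
    show QuotientGroup.mk x * QuotientGroup.mk a = QuotientGroup.mk a * QuotientGroup.mk x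
    rw [← QuotientGroup.mk_mul, ← QuotientGroup.mk_mul]
    exact h2.symm
  have habK : ∀ a b : G, a ∈ G' → b ∈ G' →
      Commute (QuotientGroup.mk a : G ⧸ K) (QuotientGroup.mk b) := by
    intro a b ha hb
    show QuotientGroup.mk a * QuotientGroup.mk b = QuotientGroup.mk b * QuotientGroup.mk a
    rw [← QuotientGroup.mk_mul, ← QuotientGroup.mk_mul, hcomm a b ha hb]
  have hcomQ : ∀ p q : G ⧸ K, p * q = q * p := by
    intro p q
    obtain ⟨g, rfl⟩ := QuotientGroup.mk_surjective p
    obtain ⟨h, rfl⟩ := QuotientGroup.mk_surjective q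
    obtain ⟨i, a, ha, rfl⟩ := gen x hx g
    obtain ⟨j, b, hb, rfl⟩ := gen x hx h
    have e1 : (QuotientGroup.mk (x ^ i * a) : G ⧸ K)
        = (QuotientGroup.mk x : G ⧸ K) ^ i * QuotientGroup.mk a := by
      rw [QuotientGroup.mk_mul, QuotientGroup.mk_zpow]
    have e2 : (QuotientGroup.mk (x ^ j * b) : G ⧸ K)
        = (QuotientGroup.mk x : G ⧸ K) ^ j * QuotientGroup.mk b := by
      rw [QuotientGroup.mk_mul, QuotientGroup.mk_zpow]
    rw [e1, e2]
    have c1 : Commute ((QuotientGroup.mk x : G ⧸ K) ^ i) ((QuotientGroup.mk x : G ⧸ K) ^ j) :=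
      (Commute.refl _).zpow_zpow i j
    have c2 : Commute ((QuotientGroup.mk x : G ⧸ K) ^ i) (QuotientGroup.mk b : G ⧸ K) :=
      (hxa b hb).zpow_left i
    have c3 : Commute (QuotientGroup.mk a : G ⧸ K) ((QuotientGroup.mk x : G ⧸ K) ^ j) :=
      (hxa a ha).symm.zpow_right j
    have c4 : Commute (QuotientGroup.mk a : G ⧸ K) (QuotientGroup.mk b : G ⧸ K) :=
      habK a b ha hb
    exact ((c1.mul_right c2).mul_left (c3.mul_right c4)).eq
  -- commutator G = K
  have hcomm_le : commutator G ≤ K := by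
    letI : CommGroup (G ⧸ K) :=
      { (inferInstance : Group (G ⧸ K)) with mul_comm := hcomQ }
    have h := Abelianization.commutator_subset_ker (QuotientGroup.mk' K)
    rwa [QuotientGroup.ker_mk'] at h
  have hK_le : K ≤ commutator G := by
    intro z hz
    rw [hKmem] at hz
    obtain ⟨a, ha, rfl⟩ := hz
    open scoped commutatorElement in
    have he : x⁻¹ * a * x * a⁻¹ = ⁅x⁻¹, a⁆ := by
      rw [commutatorElement_def]; group
    rw [he]
    exact Subgroup.commutator_mem_commutator (Subgroup.mem_top _) (Subgroup.mem_top _)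
  have hKcomm : commutator G = K := le_antisymm hcomm_le hK_le
  -- the center is contained in G'
  have hZle : Z ≤ G' := by
    intro z hz
    by_contra hzG
    apply hnab
    intro g h
    obtain ⟨i, a, ha, rfl⟩ := gen z hzG g
    obtain ⟨j, b, hb, rfl⟩ := gen z hzG h
    have cz : ∀ w : G, Commute z w := fun w => (Subgroup.mem_center_iff.mp hz w).symm
    have c1 : Commute (z ^ i) (z ^ j) := (Commute.refl z).zpow_zpow i j
    have c2 : Commute (z ^ i) b := (cz b).zpow_left i
    have c3 : Commute a (z ^ j) := (cz a).symm.zpow_right j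
    have c4 : Commute a b := hcomm a b ha hb
    exact ((c1.mul_right c2).mul_left (c3.mul_right c4)).eq
  -- ker f corresponds to the center
  have hker : f.ker.map G'.subtype = Z := by
    apply le_antisymm
    · rintro _ ⟨⟨a, haG⟩, hk, rfl⟩
      have h1 : x⁻¹ * a * x * a⁻¹ = 1 := congrArg Subtype.val hk
      have h2 : x⁻¹ * a * x = a := mul_inv_eq_one.mp h1
      have hax : x * a = a * x := by
        conv_lhs => rw [← h2]
        group
      show a ∈ Z
      rw [hZdef, Subgroup.mem_center_iff]
      intro g
      obtain ⟨i, b, hb, rfl⟩ := gen x hx g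
      have cxa : Commute x a := hax
      have c2 : Commute a (x ^ i) := cxa.symm.zpow_right i
      have c4 : Commute a b := hcomm a b haG hb
      exact ((c2.mul_right c4).symm).eq
    · intro z hz
      have hzG : z ∈ G' := hZle hz
      refine ⟨⟨z, hzG⟩, ?_, rfl⟩
      have hxz : x * z = z * x := Subgroup.mem_center_iff.mp hz x
      have h4 : x⁻¹ * z * x = z := by
        rw [mul_assoc, ← hxz]; group
      refine MonoidHom.mem_ker.mpr (Subtype.ext ?_)
      show x⁻¹ * z * x * z⁻¹ = 1
      rw [h4]; simp
  -- cardinality bookkeeping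
  have hcard_ker : Nat.card f.ker = Nat.card Z := by
    rw [← hker]
    exact Nat.card_congr
      (Subgroup.equivMapOfInjective f.ker G'.subtype (Subgroup.subtype_injective G')).toEquiv
  have hcard_K : Nat.card K = Nat.card f.range := by
    rw [hKdef]
    exact (Nat.card_congr
      (Subgroup.equivMapOfInjective f.range G'.subtype (Subgroup.subtype_injective G')).toEquiv).symm
  have hcard_G' : Nat.card G' = Nat.card f.ker * Nat.card f.range := by
    have h1 := Subgroup.card_mul_index f.ker
    have h2 : f.ker.index = Nat.card f.range := by
      rw [Subgroup.index_eq_card]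
      exact Nat.card_congr (QuotientGroup.quotientKerEquivRange f).toEquiv
    rw [← h1, h2]
  have hGcard : Nat.card G = l * Nat.card G' := by
    rw [← Subgroup.index_mul_card G', hidx]
  have hZpos : 0 < Nat.card Z := Nat.card_pos
  have hZidx : Z.index * Nat.card Z = Nat.card G := Subgroup.index_mul_card Z
  have hfinal : Z.index = l * Nat.card K := by
    have h : Z.index * Nat.card Z = (l * Nat.card K) * Nat.card Z := by
      rw [hZidx, hGcard, hcard_G', hcard_ker, hcard_K]
      ring
    exact Nat.eq_of_mul_eq_mul_right hZpos h
  rw [hKcomm, hfinal]
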